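/- Let α ≠ 0, c > 0, and let v : [0,1) → ℝ be positive, twice continuously differentiable, with v(0) = c, v' > 0 on (0,1), and v(x) → +∞ as x → 1. Let f₁ : (c,∞) → (0,1) be the inverse of v. Let λ > α²c and let A₁^λ = {(x,ξ) : 0 ≤ x < 1, 0 < ξ, ξ²/v(x) + α²v(x) < λ}. Then ∬_{A₁^λ} [ −(1/2)( (2ξ⁴/(3v²))(v''/v² − 2(v')²/v³) − 2α²v''ξ²/v² ) − (2ξ²/(3v))( ξ²(3(v')²/v⁴ − v''/v³) + α²(v''/v − (v')²/v²) ) − ((v')²/(3v))(α² − ξ²/v²)² + ((v')²/(2v))( 5ξ⁴/(2v⁴) − 3ξ²α²/v² + α⁴/2 ) ] dx dξ = ∫_c^{λ/α²} √(λ − α²s) [ ( −α⁴/(9√s) + λα²/(9s√s) − λ²/(12s²√s) ) · (1/f₁'(s)) + ( λα²/(45√s) − λ²/(15s√s) + 2α⁴√s/45 ) · ( f₁''(s)/(f₁'(s))² ) ] ds. -/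

import Mathlib

open Set MeasureTheory Filter Topology

private lemma key_poly (α V V1 V2 ξ : ℝ) (hV : V ≠ 0) :
    (-(1 / 2) * ((2 * ξ ^ 4 / (3 * V ^ 2)) *
            (V2 / V ^ 2 - 2 * V1 ^ 2 / V ^ 3) -
          2 * α ^ 2 * V2 * ξ ^ 2 / V ^ 2)
        - (2 * ξ ^ 2 / (3 * V)) *
            (ξ ^ 2 * (3 * V1 ^ 2 / V ^ 4 - V2 / V ^ 3) +
              α ^ 2 * (V2 / V - V1 ^ 2 / V ^ 2))
        - (V1 ^ 2 / (3 * V)) * (α ^ 2 - ξ ^ 2 / V ^ 2) ^ 2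
        + (V1 ^ 2 / (2 * V)) *
            (5 * ξ ^ 4 / (2 * V ^ 4) - 3 * ξ ^ 2 * α ^ 2 / V ^ 2 + α ^ 4 / 2))
    = (-α ^ 4 * V1 ^ 2 / (12 * V)) +
        (α ^ 2 * V2 / (3 * V ^ 2) - α ^ 2 * V1 ^ 2 / (6 * V ^ 3)) * ξ ^ 2 +
        (V2 / (3 * V ^ 4) - 5 * V1 ^ 2 / (12 * V ^ 5)) * ξ ^ 4 := by
  field_simp
  ring

private lemma key_alg (α lam s w1 w2 : ℝ) (hs : 0 < s) (hw1 : 0 < w1)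
    (hE : 0 < lam - α ^ 2 * s) :
    |w1| * (Real.sqrt (lam - α ^ 2 * s) *
      ((-α ^ 4 / (9 * Real.sqrt s) + lam * α ^ 2 / (9 * s * Real.sqrt s) -
          lam ^ 2 / (12 * s ^ 2 * Real.sqrt s)) * w1 +
        (lam * α ^ 2 / (45 * Real.sqrt s) - lam ^ 2 / (15 * s * Real.sqrt s) +
          2 * α ^ 4 * Real.sqrt s / 45) * (-w2 / w1)))
    = (-α ^ 4 * w1 ^ 2 / (12 * s)) * Real.sqrt (s * (lam - α ^ 2 * s)) +
      (α ^ 2 * w2 / (3 * s ^ 2) - α ^ 2 * w1 ^ 2 / (6 * s ^ 3)) *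
        Real.sqrt (s * (lam - α ^ 2 * s)) ^ 3 / 3 +
      (w2 / (3 * s ^ 4) - 5 * w1 ^ 2 / (12 * s ^ 5)) *
        Real.sqrt (s * (lam - α ^ 2 * s)) ^ 5 / 5 := by
  rw [Real.sqrt_mul hs.le, abs_of_pos hw1]
  set a := Real.sqrt s with ha'
  set b := Real.sqrt (lam - α ^ 2 * s) with hb'
  have ha : 0 < a := Real.sqrt_pos.mpr hs
  have hb : 0 < b := Real.sqrt_pos.mpr hE
  have hs2 : s = a ^ 2 := by rw [ha', Real.sq_sqrt hs.le]
  have hb2 : b ^ 2 = lam - α ^ 2 * s := by rw [hb', Real.sq_sqrt hE.le]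
  have hlam2 : lam = α ^ 2 * a ^ 2 + b ^ 2 := by rw [← hs2]; linarith
  rw [hlam2, hs2]
  field_simp
  ring

private lemma inner_int (A0 A2 A4 g : ℝ) (hg : 0 ≤ g) :
    ∫ ξ in Ioo (0:ℝ) g, (A0 + A2 * ξ ^ 2 + A4 * ξ ^ 4) =
      A0 * g + A2 * g ^ 3 / 3 + A4 * g ^ 5 / 5 := by
  rw [← integral_Ioc_eq_integral_Ioo, ← intervalIntegral.integral_of_le hg]
  have i2 : IntervalIntegrable (fun ξ : ℝ => A2 * ξ ^ 2) volume 0 g :=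
    (intervalIntegral.intervalIntegrable_pow 2).const_mul A2
  have i4 : IntervalIntegrable (fun ξ : ℝ => A4 * ξ ^ 4) volume 0 g :=
    (intervalIntegral.intervalIntegrable_pow 4).const_mul A4
  rw [intervalIntegral.integral_add (intervalIntegrable_const.add i2) i4,
    intervalIntegral.integral_add intervalIntegrable_const i2,
    intervalIntegral.integral_const, intervalIntegral.integral_const_mul,
    intervalIntegral.integral_const_mul, integral_pow, integral_pow]
  push_cast
  rw [smul_eq_mul]
  ring

/-- The contribution of the first-quadrant region `A₁^λ` to the second-order spectral
invariant, rewritten in the variable `s = v(x)` via the inverse function `f₁`, so that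
`v'(f₁(s)) = 1/f₁'(s)` and `v''(f₁(s)) = -f₁''(s)/(f₁'(s))³`. -/
theorem second_invariant_region_change_of_variables
    (α c : ℝ) (hα : α ≠ 0) (hc : 0 < c) (v : ℝ → ℝ)
    (hv_pos : ∀ x ∈ Ico (0 : ℝ) 1, 0 < v x)
    (hv : ContDiffOn ℝ 2 v (Ico 0 1))
    (hv0 : v 0 = c)
    (hv_deriv : ∀ x ∈ Ioo (0 : ℝ) 1, 0 < deriv v x)
    (hv_top : Tendsto v (𝓝[<] (1 : ℝ)) atTop)
    (f₁ : ℝ → ℝ)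
    (hf₁_mem : ∀ s ∈ Ioi c, f₁ s ∈ Ioo (0 : ℝ) 1)
    (hf₁_inv : ∀ s ∈ Ioi c, v (f₁ s) = s)
    (lam : ℝ) (hlam : α ^ 2 * c < lam) :
    (∫ p in {q : ℝ × ℝ | 0 ≤ q.1 ∧ q.1 < 1 ∧ 0 < q.2 ∧
        q.2 ^ 2 / v q.1 + α ^ 2 * v q.1 < lam},
      (-(1 / 2) * ((2 * p.2 ^ 4 / (3 * (v p.1) ^ 2)) *
            (deriv (deriv v) p.1 / (v p.1) ^ 2 - 2 * (deriv v p.1) ^ 2 / (v p.1) ^ 3) -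
          2 * α ^ 2 * deriv (deriv v) p.1 * p.2 ^ 2 / (v p.1) ^ 2)
        - (2 * p.2 ^ 2 / (3 * v p.1)) *
            (p.2 ^ 2 * (3 * (deriv v p.1) ^ 2 / (v p.1) ^ 4 -
                deriv (deriv v) p.1 / (v p.1) ^ 3) +
              α ^ 2 * (deriv (deriv v) p.1 / v p.1 - (deriv v p.1) ^ 2 / (v p.1) ^ 2))
        - ((deriv v p.1) ^ 2 / (3 * v p.1)) * (α ^ 2 - p.2 ^ 2 / (v p.1) ^ 2) ^ 2
        + ((deriv v p.1) ^ 2 / (2 * v p.1)) *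
            (5 * p.2 ^ 4 / (2 * (v p.1) ^ 4) - 3 * p.2 ^ 2 * α ^ 2 / (v p.1) ^ 2 +
              α ^ 4 / 2)))
      = ∫ s in Ioo c (lam / α ^ 2),
          Real.sqrt (lam - α ^ 2 * s) *
            ((-α ^ 4 / (9 * Real.sqrt s) + lam * α ^ 2 / (9 * s * Real.sqrt s) -
                lam ^ 2 / (12 * s ^ 2 * Real.sqrt s)) * (1 / deriv f₁ s) +
              (lam * α ^ 2 / (45 * Real.sqrt s) - lam ^ 2 / (15 * s * Real.sqrt s) +
                2 * α ^ 4 * Real.sqrt s / 45) *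
                (deriv (deriv f₁) s / (deriv f₁ s) ^ 2)) := by
  have hα2 : (0:ℝ) < α ^ 2 := by positivity
  have hlam0 : (0:ℝ) < lam := lt_trans (by positivity) hlam
  set L := lam / α ^ 2 with hLdef
  have hcL : c < L := (lt_div_iff₀ hα2).mpr (by linarith)
  have haL : α ^ 2 * L = lam := by rw [hLdef]; field_simp
  set V1 := derivWithin v (Ico (0:ℝ) 1) with hV1def
  set V2 := derivWithin V1 (Ico (0:ℝ) 1) with hV2def
  have hU : UniqueDiffOn ℝ (Ico (0:ℝ) 1) := uniqueDiffOn_Ico 0 1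
  have hC0 : ContinuousOn v (Ico 0 1) := hv.continuousOn
  have hCD1 : ContDiffOn ℝ 1 V1 (Ico 0 1) := hv.derivWithin hU (by norm_num)
  have hC1 : ContinuousOn V1 (Ico 0 1) := hCD1.continuousOn
  have hC2 : ContinuousOn V2 (Ico 0 1) := hCD1.continuousOn_derivWithin hU le_rfl
  have hmemIco : ∀ x ∈ Ioo (0:ℝ) 1, Ico (0:ℝ) 1 ∈ 𝓝 x := fun x hx =>
    mem_nhds_iff.mpr ⟨Ioo 0 1, Ioo_subset_Ico_self, isOpen_Ioo, hx⟩
  have hd1 : ∀ x ∈ Ioo (0:ℝ) 1, HasDerivAt v (V1 x) x := by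
    intro x hx
    have hn := hmemIco x hx
    have hdiff : DifferentiableAt ℝ v x :=
      (hv.differentiableOn (by norm_num) x ⟨hx.1.le, hx.2⟩).differentiableAt hn
    have h := hdiff.hasDerivAt
    rw [hV1def, derivWithin_of_mem_nhds hn]
    exact h
  have hd1' : ∀ x ∈ Ioo (0:ℝ) 1, deriv v x = V1 x := by
    intro x hx
    rw [hV1def]
    exact (derivWithin_of_mem_nhds (hmemIco x hx)).symm
  have hdV1 : ∀ x ∈ Ioo (0:ℝ) 1, HasDerivAt V1 (V2 x) x := by
    intro x hx
    have hn := hmemIco x hx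
    have hdiff : DifferentiableAt ℝ V1 x :=
      (hCD1.differentiableOn one_ne_zero x ⟨hx.1.le, hx.2⟩).differentiableAt hn
    have h := hdiff.hasDerivAt
    rw [hV2def, derivWithin_of_mem_nhds hn]
    exact h
  have hd2 : ∀ x ∈ Ioo (0:ℝ) 1, HasDerivAt (deriv v) (V2 x) x := by
    intro x hx
    refine (hdV1 x hx).congr_of_eventuallyEq ?_
    exact Filter.eventuallyEq_of_mem (isOpen_Ioo.mem_nhds hx) (fun y hy => hd1' y hy)
  have hd2' : ∀ x ∈ Ioo (0:ℝ) 1, deriv (deriv v) x = V2 x := fun x hx => (hd2 x hx).deriv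
  have hmono : StrictMonoOn v (Ico 0 1) :=
    strictMonoOn_of_deriv_pos (convex_Ico 0 1) hC0 (by rw [interior_Ico]; exact hv_deriv)
  have hgtc : ∀ x ∈ Ioo (0:ℝ) 1, c < v x := by
    intro x hx
    have := hmono ⟨le_refl 0, by norm_num⟩ ⟨hx.1.le, hx.2⟩ hx.1
    rwa [hv0] at this
  have hV1pos : ∀ x ∈ Ioo (0:ℝ) 1, 0 < V1 x := by
    intro x hx
    rw [← hd1' x hx]
    exact hv_deriv x hx
  set T := f₁ L with hTdef
  have hTmem : T ∈ Ioo (0:ℝ) 1 := hf₁_mem L hcL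
  have hvT : v T = L := hf₁_inv L hcL
  have hsub1T : Ioo (0:ℝ) T ⊆ Ioo (0:ℝ) 1 := fun x hx => ⟨hx.1, lt_trans hx.2 hTmem.2⟩
  have hIccT : Icc (0:ℝ) T ⊆ Ico (0:ℝ) 1 := fun x hx => ⟨hx.1, lt_of_le_of_lt hx.2 hTmem.2⟩
  have hsubIco : Ioo (0:ℝ) T ⊆ Ico (0:ℝ) 1 := fun x hx => ⟨hx.1.le, lt_trans hx.2 hTmem.2⟩
  have hvx : ∀ x ∈ Ioo (0:ℝ) T, v x ∈ Ioo c L := by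
    intro x hx
    refine ⟨hgtc x (hsub1T hx), ?_⟩
    have := hmono ⟨hx.1.le, lt_trans hx.2 hTmem.2⟩ ⟨hTmem.1.le, hTmem.2⟩ hx.2
    rwa [hvT] at this
  have hf₁v : ∀ x ∈ Ioo (0:ℝ) 1, f₁ (v x) = x := by
    intro x hx
    have hcv : v x ∈ Ioi c := hgtc x hx
    have h2 := hf₁_mem (v x) hcv
    exact hmono.injOn ⟨h2.1.le, h2.2⟩ ⟨hx.1.le, hx.2⟩ (hf₁_inv (v x) hcv)
  -- continuity of f₁
  have hcont_f₁ : ∀ s ∈ Ioi c, ContinuousAt f₁ s := by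
    intro s₀ hs₀
    have hx₀ := hf₁_mem s₀ hs₀
    refine tendsto_order.mpr ⟨?_, ?_⟩
    · intro x' hx'
      set u := max x' (f₁ s₀ / 2) with hu
      have hu1 : u < f₁ s₀ := max_lt hx' (by linarith [hx₀.1])
      have hu0 : 0 < u := lt_of_lt_of_le (by linarith [hx₀.1]) (le_max_right _ _)
      have huI : u ∈ Ico (0:ℝ) 1 := ⟨hu0.le, lt_trans hu1 hx₀.2⟩
      have hvu : v u < s₀ := by
        have := hmono huI ⟨hx₀.1.le, hx₀.2⟩ hu1
        rwa [hf₁_inv s₀ hs₀] at this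
      have hvuc : c < v u := hgtc u ⟨hu0, huI.2⟩
      filter_upwards [Ioi_mem_nhds hvu] with t ht
      have htc : t ∈ Ioi c := lt_trans hvuc ht
      have hmem := hf₁_mem t htc
      have hlt : u < f₁ t := by
        by_contra hcon
        push_neg at hcon
        have := hmono.monotoneOn ⟨hmem.1.le, hmem.2⟩ huI hcon
        rw [hf₁_inv t htc] at this
        exact absurd (lt_of_lt_of_le ht this) (lt_irrefl _)
      exact lt_of_le_of_lt (le_max_left _ _) hlt
    · intro x' hx'
      set u := min x' ((f₁ s₀ + 1) / 2) with hu
      have hu1 : f₁ s₀ < u := lt_min hx' (by linarith [hx₀.2])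
      have hu2 : u < 1 := lt_of_le_of_lt (min_le_right _ _) (by linarith [hx₀.2])
      have hu0 : 0 < u := lt_trans hx₀.1 hu1
      have huI : u ∈ Ico (0:ℝ) 1 := ⟨hu0.le, hu2⟩
      have hvu : s₀ < v u := by
        have := hmono ⟨hx₀.1.le, hx₀.2⟩ huI hu1
        rwa [hf₁_inv s₀ hs₀] at this
      filter_upwards [Iio_mem_nhds hvu, Ioi_mem_nhds hs₀] with t ht htc
      have hmem := hf₁_mem t htc
      have hlt : f₁ t < u := by
        by_contra hcon
        push_neg at hcon
        have := hmono.monotoneOn huI ⟨hmem.1.le, hmem.2⟩ hcon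
        rw [hf₁_inv t htc] at this
        exact absurd (lt_of_le_of_lt this ht) (lt_irrefl _)
      exact lt_of_lt_of_le hlt (min_le_left _ _)
  have hder_f₁ : ∀ s ∈ Ioi c, HasDerivAt f₁ ((V1 (f₁ s))⁻¹) s := by
    intro s hs
    have hmem := hf₁_mem s hs
    exact HasDerivAt.of_local_left_inverse (hcont_f₁ s hs) (hd1 _ hmem)
      (hV1pos _ hmem).ne' (Filter.eventually_of_mem (Ioi_mem_nhds hs) (fun t ht => hf₁_inv t ht))
  have hDf : ∀ s ∈ Ioi c, deriv f₁ s = (V1 (f₁ s))⁻¹ := fun s hs => (hder_f₁ s hs).deriv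
  have hDDf : ∀ s ∈ Ioi c,
      deriv (deriv f₁) s = -(V2 (f₁ s) * (V1 (f₁ s))⁻¹) / (V1 (f₁ s)) ^ 2 := by
    intro s hs
    have hmem := hf₁_mem s hs
    have hφ : HasDerivAt (fun t => (V1 (f₁ t))⁻¹)
        (-(V2 (f₁ s) * (V1 (f₁ s))⁻¹) / (V1 (f₁ s)) ^ 2) s := by
      have h1 : HasDerivAt (fun t => V1 (f₁ t)) (V2 (f₁ s) * (V1 (f₁ s))⁻¹) s :=
        (hdV1 _ hmem).comp s (hder_f₁ s hs)
      exact h1.inv (hV1pos _ hmem).ne'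
    have hev : deriv f₁ =ᶠ[𝓝 s] fun t => (V1 (f₁ t))⁻¹ :=
      Filter.eventuallyEq_of_mem (Ioi_mem_nhds hs) (fun t ht => hDf t ht)
    rw [hev.deriv_eq]
    exact hφ.deriv
  -- abbreviations for the polynomial coefficients and related functions
  set g := fun x : ℝ => Real.sqrt (v x * (lam - α ^ 2 * v x)) with hgdef
  set A0f := fun x : ℝ => -α ^ 4 * (V1 x) ^ 2 / (12 * v x) with hA0def
  set A2f := fun x : ℝ =>
    α ^ 2 * V2 x / (3 * (v x) ^ 2) - α ^ 2 * (V1 x) ^ 2 / (6 * (v x) ^ 3) with hA2def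
  set A4f := fun x : ℝ =>
    V2 x / (3 * (v x) ^ 4) - 5 * (V1 x) ^ 2 / (12 * (v x) ^ 5) with hA4def
  set F := fun x : ℝ => A0f x * g x + A2f x * g x ^ 3 / 3 + A4f x * g x ^ 5 / 5 with hFdef
  set H := fun q : ℝ × ℝ => A0f q.1 + A2f q.1 * q.2 ^ 2 + A4f q.1 * q.2 ^ 4 with hHdef
  set S₂ := {q : ℝ × ℝ | 0 < q.1 ∧ q.1 < T ∧ 0 < q.2 ∧
      q.2 ^ 2 < v q.1 * (lam - α ^ 2 * v q.1)} with hS₂def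
  set Ψ := fun s : ℝ => Real.sqrt (lam - α ^ 2 * s) *
      ((-α ^ 4 / (9 * Real.sqrt s) + lam * α ^ 2 / (9 * s * Real.sqrt s) -
          lam ^ 2 / (12 * s ^ 2 * Real.sqrt s)) * V1 (f₁ s) +
        (lam * α ^ 2 / (45 * Real.sqrt s) - lam ^ 2 / (15 * s * Real.sqrt s) +
          2 * α ^ 4 * Real.sqrt s / 45) * (-V2 (f₁ s) / V1 (f₁ s))) with hΨdef
  have hEpos : ∀ x ∈ Ioo (0:ℝ) T, 0 < lam - α ^ 2 * v x := by
    intro x hx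
    have h := (hvx x hx).2
    have := mul_lt_mul_of_pos_left h hα2
    rw [haL] at this
    linarith
  -- openness and measurability of S₂
  have hS₂open : IsOpen S₂ := by
    have heq : S₂ = (((Ioo (0:ℝ) T) ×ˢ (univ : Set ℝ)) ∩
        (fun q : ℝ × ℝ => v q.1 * (lam - α ^ 2 * v q.1) - q.2 ^ 2) ⁻¹' (Ioi 0)) ∩
        ((univ : Set ℝ) ×ˢ (Ioi (0:ℝ))) := by
      ext q
      simp only [hS₂def, mem_setOf_eq, mem_inter_iff, mem_prod, mem_Ioo, mem_univ,
        mem_preimage, mem_Ioi, and_true, true_and]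
      constructor
      · rintro ⟨h1, h2, h3, h4⟩
        exact ⟨⟨⟨h1, h2⟩, by linarith⟩, h3⟩
      · rintro ⟨⟨⟨h1, h2⟩, h4⟩, h3⟩
        exact ⟨h1, h2, h3, by linarith⟩
    rw [heq]
    refine IsOpen.inter (ContinuousOn.isOpen_inter_preimage ?_
      (isOpen_Ioo.prod isOpen_univ) isOpen_Ioi) (isOpen_univ.prod isOpen_Ioi)
    have hvf : ContinuousOn (fun q : ℝ × ℝ => v q.1) ((Ioo (0:ℝ) T) ×ˢ (univ : Set ℝ)) := by
      refine (hC0.mono (fun y (hy : y ∈ Ioo (0:ℝ) T) => ⟨hy.1.le, lt_trans hy.2 hTmem.2⟩)).comp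
        continuous_fst.continuousOn ?_
      intro q hq
      exact hq.1
    exact (hvf.mul (continuousOn_const.sub (continuousOn_const.mul hvf))).sub
      ((continuous_snd.continuousOn).pow 2)
  have hS₂m : MeasurableSet S₂ := hS₂open.measurableSet
  -- S₂ is contained in a compact box
  set B := Real.sqrt (L * lam) with hBdef
  have hbox : S₂ ⊆ (Icc (0:ℝ) T) ×ˢ (Icc (0:ℝ) B) := by
    rintro q ⟨h1, h2, h3, h4⟩
    have hxm : q.1 ∈ Ioo (0:ℝ) T := ⟨h1, h2⟩
    have hvm := hvx q.1 hxm
    have hvp : 0 < v q.1 := lt_trans hc hvm.1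
    have hE : 0 < lam - α ^ 2 * v q.1 := hEpos q.1 hxm
    have hle : q.2 ^ 2 ≤ L * lam := by nlinarith [mul_pos hα2 hvp]
    have hqB : q.2 ≤ B := by
      have := Real.sqrt_le_sqrt hle
      rwa [Real.sqrt_sq h3.le] at this
    exact ⟨⟨h1.le, h2.le⟩, h3.le, hqB⟩
  -- continuity of H
  have hvne : ∀ x ∈ Ico (0:ℝ) 1, v x ≠ 0 := fun x hx => (hv_pos x hx).ne'
  have hA0c : ContinuousOn A0f (Ico 0 1) := by
    rw [hA0def]
    exact (continuousOn_const.mul (hC1.pow 2)).div (continuousOn_const.mul hC0)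
      (fun x hx => mul_ne_zero (by norm_num) (hvne x hx))
  have hA2c : ContinuousOn A2f (Ico 0 1) := by
    rw [hA2def]
    exact ((continuousOn_const.mul hC2).div (continuousOn_const.mul (hC0.pow 2))
        (fun x hx => mul_ne_zero (by norm_num) (pow_ne_zero _ (hvne x hx)))).sub
      ((continuousOn_const.mul (hC1.pow 2)).div (continuousOn_const.mul (hC0.pow 3))
        (fun x hx => mul_ne_zero (by norm_num) (pow_ne_zero _ (hvne x hx))))
  have hA4c : ContinuousOn A4f (Ico 0 1) := by
    rw [hA4def]
    exact (hC2.div (continuousOn_const.mul (hC0.pow 4))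
        (fun x hx => mul_ne_zero (by norm_num) (pow_ne_zero _ (hvne x hx)))).sub
      ((continuousOn_const.mul (hC1.pow 2)).div (continuousOn_const.mul (hC0.pow 5))
        (fun x hx => mul_ne_zero (by norm_num) (pow_ne_zero _ (hvne x hx))))
  have hHcont : ContinuousOn H ((Ico (0:ℝ) 1) ×ˢ (univ : Set ℝ)) := by
    rw [hHdef]
    have hfst : ∀ {G : ℝ → ℝ}, ContinuousOn G (Ico (0:ℝ) 1) →
        ContinuousOn (fun q : ℝ × ℝ => G q.1) ((Ico (0:ℝ) 1) ×ˢ (univ : Set ℝ)) :=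
      fun hG => hG.comp continuous_fst.continuousOn (fun q hq => hq.1)
    exact ((hfst hA0c).add ((hfst hA2c).mul ((continuous_snd.continuousOn).pow 2))).add
      ((hfst hA4c).mul ((continuous_snd.continuousOn).pow 4))
  have hIntH : IntegrableOn H S₂ := by
    refine (IntegrableOn.mono_set ?_ hbox)
    refine (hHcont.mono ?_).integrableOn_compact (isCompact_Icc.prod isCompact_Icc)
    intro q hq
    exact ⟨hIccT hq.1, mem_univ _⟩
  -- the region in the statement agrees a.e. with S₂
  have hae : {q : ℝ × ℝ | 0 ≤ q.1 ∧ q.1 < 1 ∧ 0 < q.2 ∧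
      q.2 ^ 2 / v q.1 + α ^ 2 * v q.1 < lam} =ᵐ[volume] S₂ := by
    have hsub21 : S₂ ⊆ {q : ℝ × ℝ | 0 ≤ q.1 ∧ q.1 < 1 ∧ 0 < q.2 ∧
        q.2 ^ 2 / v q.1 + α ^ 2 * v q.1 < lam} := by
      rintro q ⟨h1, h2, h3, h4⟩
      have hx1 : q.1 < 1 := lt_trans h2 hTmem.2
      have hvp : 0 < v q.1 := hv_pos q.1 ⟨h1.le, hx1⟩
      refine ⟨h1.le, hx1, h3, ?_⟩
      rw [div_add' _ _ _ hvp.ne', div_lt_iff₀ hvp]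
      nlinarith
    have hdiffsub : {q : ℝ × ℝ | 0 ≤ q.1 ∧ q.1 < 1 ∧ 0 < q.2 ∧
        q.2 ^ 2 / v q.1 + α ^ 2 * v q.1 < lam} \ S₂ ⊆ {q : ℝ × ℝ | q.1 = 0} := by
      rintro q ⟨⟨h1, h2, h3, h4⟩, hns⟩
      by_contra hne
      have h1' : 0 < q.1 := lt_of_le_of_ne h1 (Ne.symm hne)
      have hvp : 0 < v q.1 := hv_pos q.1 ⟨h1, h2⟩
      apply hns
      have hxT : q.1 < T := by
        by_contra hcon
        push_neg at hcon
        have hge : L ≤ v q.1 := by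
          have := hmono.monotoneOn ⟨hTmem.1.le, hTmem.2⟩ ⟨h1, h2⟩ hcon
          rwa [hvT] at this
        have h5 : lam ≤ α ^ 2 * v q.1 := by
          rw [← haL]
          exact mul_le_mul_of_nonneg_left hge hα2.le
        have h6 : 0 < q.2 ^ 2 / v q.1 := div_pos (by positivity) hvp
        linarith
      refine ⟨h1', hxT, h3, ?_⟩
      have := (div_lt_iff₀ hvp).mp (by linarith : q.2 ^ 2 / v q.1 < lam - α ^ 2 * v q.1)
      nlinarith
    have hnull : volume {q : ℝ × ℝ | q.1 = 0} = 0 := by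
      have heq : {q : ℝ × ℝ | q.1 = 0} = ({0} : Set ℝ) ×ˢ (univ : Set ℝ) := by
        ext q
        constructor
        · intro h
          exact ⟨h, trivial⟩
        · intro h
          exact h.1
      rw [heq, Measure.volume_eq_prod, Measure.prod_prod]
      simp
    rw [Filter.eventuallyEq_set, MeasureTheory.ae_iff]
    refine measure_mono_null (fun q hq => ?_) hnull
    simp only [mem_setOf_eq] at hq ⊢
    by_contra hne
    refine hq ?_
    constructor
    · intro hmem
      by_contra h2
      exact hne (hdiffsub ⟨hmem, h2⟩)
    · exact fun h => hsub21 h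
  -- Fubini: reduce the double integral to a single integral in x
  have hfub : (∫ p in S₂, H p) = ∫ x in Ioo (0:ℝ) T, F x := by
    rw [← integral_indicator hS₂m]
    have hint : Integrable (S₂.indicator H) volume :=
      (integrable_indicator_iff hS₂m).mpr hIntH
    rw [Measure.volume_eq_prod] at hint ⊢
    rw [MeasureTheory.integral_prod _ hint]
    have hsec : ∀ x : ℝ, (∫ ξ, S₂.indicator H (x, ξ)) = (Ioo (0:ℝ) T).indicator F x := by
      intro x
      by_cases hx : x ∈ Ioo (0:ℝ) T
      · have hvm := hvx x hx
        have hvp : 0 < v x := lt_trans hc hvm.1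
        have hE : 0 < lam - α ^ 2 * v x := hEpos x hx
        have hchar : ∀ ξ : ℝ, S₂.indicator H (x, ξ)
            = (Ioo 0 (g x)).indicator (fun ξ => H (x, ξ)) ξ := by
          intro ξ
          by_cases hξ : ξ ∈ Ioo (0:ℝ) (g x)
          · rw [indicator_of_mem hξ, indicator_of_mem]
            refine ⟨hx.1, hx.2, hξ.1, ?_⟩
            have h5 := hξ.2
            rw [hgdef] at h5
            exact (Real.lt_sqrt hξ.1.le).mp h5
          · rw [indicator_of_notMem hξ, indicator_of_notMem]
            intro hmem
            rw [hS₂def, mem_setOf_eq] at hmem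
            refine hξ ⟨hmem.2.2.1, ?_⟩
            rw [hgdef]
            exact (Real.lt_sqrt hmem.2.2.1.le).mpr hmem.2.2.2
        rw [indicator_of_mem hx]
        calc (∫ ξ, S₂.indicator H (x, ξ))
            = ∫ ξ, (Ioo 0 (g x)).indicator (fun ξ => H (x, ξ)) ξ := by simp only [hchar]
          _ = ∫ ξ in Ioo 0 (g x), H (x, ξ) := integral_indicator measurableSet_Ioo
          _ = F x := by
              simp only [hHdef, hFdef]
              exact inner_int (A0f x) (A2f x) (A4f x) (g x) (Real.sqrt_nonneg _)
      · rw [indicator_of_notMem hx]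
        have hz : ∀ ξ : ℝ, S₂.indicator H (x, ξ) = 0 := by
          intro ξ
          refine indicator_of_notMem (fun hmem => ?_) _
          rw [hS₂def, mem_setOf_eq] at hmem
          exact hx ⟨hmem.1, hmem.2.1⟩
        simp only [hz, integral_zero]
    simp only [hsec]
    exact integral_indicator measurableSet_Ioo
  -- pointwise identity between the integrand and H on S₂
  have hpoint : EqOn (fun p : ℝ × ℝ =>
      (-(1 / 2) * ((2 * p.2 ^ 4 / (3 * (v p.1) ^ 2)) *
            (deriv (deriv v) p.1 / (v p.1) ^ 2 - 2 * (deriv v p.1) ^ 2 / (v p.1) ^ 3) -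
          2 * α ^ 2 * deriv (deriv v) p.1 * p.2 ^ 2 / (v p.1) ^ 2)
        - (2 * p.2 ^ 2 / (3 * v p.1)) *
            (p.2 ^ 2 * (3 * (deriv v p.1) ^ 2 / (v p.1) ^ 4 -
                deriv (deriv v) p.1 / (v p.1) ^ 3) +
              α ^ 2 * (deriv (deriv v) p.1 / v p.1 - (deriv v p.1) ^ 2 / (v p.1) ^ 2))
        - ((deriv v p.1) ^ 2 / (3 * v p.1)) * (α ^ 2 - p.2 ^ 2 / (v p.1) ^ 2) ^ 2
        + ((deriv v p.1) ^ 2 / (2 * v p.1)) *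
            (5 * p.2 ^ 4 / (2 * (v p.1) ^ 4) - 3 * p.2 ^ 2 * α ^ 2 / (v p.1) ^ 2 +
              α ^ 4 / 2))) H S₂ := by
    intro q hq
    rw [hS₂def, mem_setOf_eq] at hq
    obtain ⟨h1, h2, h3, h4⟩ := hq
    have hx : q.1 ∈ Ioo (0:ℝ) 1 := ⟨h1, lt_trans h2 hTmem.2⟩
    have hvp : v q.1 ≠ 0 := (hv_pos q.1 ⟨hx.1.le, hx.2⟩).ne'
    simp only
    rw [hd1' q.1 hx, hd2' q.1 hx]
    simp only [hHdef, hA0def, hA2def, hA4def]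
    exact key_poly α (v q.1) (V1 q.1) (V2 q.1) q.2 hvp
  -- rewrite the right-hand side integrand using the inverse-function derivatives
  have hRHS1 : (∫ s in Ioo c L,
      Real.sqrt (lam - α ^ 2 * s) *
        ((-α ^ 4 / (9 * Real.sqrt s) + lam * α ^ 2 / (9 * s * Real.sqrt s) -
            lam ^ 2 / (12 * s ^ 2 * Real.sqrt s)) * (1 / deriv f₁ s) +
          (lam * α ^ 2 / (45 * Real.sqrt s) - lam ^ 2 / (15 * s * Real.sqrt s) +
            2 * α ^ 4 * Real.sqrt s / 45) *
            (deriv (deriv f₁) s / (deriv f₁ s) ^ 2)))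
      = ∫ s in Ioo c L, Ψ s := by
    refine setIntegral_congr_fun measurableSet_Ioo (fun s hs => ?_)
    have hs1 : s ∈ Ioi c := hs.1
    have hw := hV1pos (f₁ s) (hf₁_mem s hs1)
    rw [hDf s hs1, hDDf s hs1]
    have h1 : 1 / (V1 (f₁ s))⁻¹ = V1 (f₁ s) := by rw [one_div, inv_inv]
    have h2 : -(V2 (f₁ s) * (V1 (f₁ s))⁻¹) / (V1 (f₁ s)) ^ 2 / ((V1 (f₁ s))⁻¹) ^ 2
        = -V2 (f₁ s) / V1 (f₁ s) := by
      field_simp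
    rw [h1, h2, hΨdef]
  -- image of the interval under v
  have himg : v '' Ioo 0 T = Ioo c L := by
    apply Subset.antisymm
    · rintro s ⟨x, hx, rfl⟩
      exact hvx x hx
    · have hIVT := intermediate_value_Ioo hTmem.1.le (hC0.mono (fun y hy => hIccT hy))
      rwa [hv0, hvT] at hIVT
  -- change of variables
  have hjac : (∫ s in Ioo c L, Ψ s) = ∫ x in Ioo (0:ℝ) T, |V1 x| • Ψ (v x) := by
    rw [← himg]
    exact integral_image_eq_integral_abs_deriv_smul measurableSet_Ioo
      (fun x hx => (hd1 x (hsub1T hx)).hasDerivWithinAt)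
      (hmono.injOn.mono hsubIco) Ψ
  -- final pointwise identity
  have hpt : EqOn (fun x => |V1 x| • Ψ (v x)) F (Ioo (0:ℝ) T) := by
    intro x hx
    have hx1 := hsub1T hx
    have hvp : 0 < v x := lt_trans hc (hvx x hx).1
    have hE := hEpos x hx
    simp only [smul_eq_mul, hΨdef, hFdef, hA0def, hA2def, hA4def, hgdef, hf₁v x hx1]
    exact key_alg α lam (v x) (V1 x) (V2 x) hvp (hV1pos x hx1) hE
  calc (∫ p in {q : ℝ × ℝ | 0 ≤ q.1 ∧ q.1 < 1 ∧ 0 < q.2 ∧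
        q.2 ^ 2 / v q.1 + α ^ 2 * v q.1 < lam},
      (-(1 / 2) * ((2 * p.2 ^ 4 / (3 * (v p.1) ^ 2)) *
            (deriv (deriv v) p.1 / (v p.1) ^ 2 - 2 * (deriv v p.1) ^ 2 / (v p.1) ^ 3) -
          2 * α ^ 2 * deriv (deriv v) p.1 * p.2 ^ 2 / (v p.1) ^ 2)
        - (2 * p.2 ^ 2 / (3 * v p.1)) *
            (p.2 ^ 2 * (3 * (deriv v p.1) ^ 2 / (v p.1) ^ 4 -
                deriv (deriv v) p.1 / (v p.1) ^ 3) +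
              α ^ 2 * (deriv (deriv v) p.1 / v p.1 - (deriv v p.1) ^ 2 / (v p.1) ^ 2))
        - ((deriv v p.1) ^ 2 / (3 * v p.1)) * (α ^ 2 - p.2 ^ 2 / (v p.1) ^ 2) ^ 2
        + ((deriv v p.1) ^ 2 / (2 * v p.1)) *
            (5 * p.2 ^ 4 / (2 * (v p.1) ^ 4) - 3 * p.2 ^ 2 * α ^ 2 / (v p.1) ^ 2 +
              α ^ 4 / 2)))
      = ∫ p in S₂, (fun p : ℝ × ℝ =>
      (-(1 / 2) * ((2 * p.2 ^ 4 / (3 * (v p.1) ^ 2)) *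
            (deriv (deriv v) p.1 / (v p.1) ^ 2 - 2 * (deriv v p.1) ^ 2 / (v p.1) ^ 3) -
          2 * α ^ 2 * deriv (deriv v) p.1 * p.2 ^ 2 / (v p.1) ^ 2)
        - (2 * p.2 ^ 2 / (3 * v p.1)) *
            (p.2 ^ 2 * (3 * (deriv v p.1) ^ 2 / (v p.1) ^ 4 -
                deriv (deriv v) p.1 / (v p.1) ^ 3) +
              α ^ 2 * (deriv (deriv v) p.1 / v p.1 - (deriv v p.1) ^ 2 / (v p.1) ^ 2))
        - ((deriv v p.1) ^ 2 / (3 * v p.1)) * (α ^ 2 - p.2 ^ 2 / (v p.1) ^ 2) ^ 2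
        + ((deriv v p.1) ^ 2 / (2 * v p.1)) *
            (5 * p.2 ^ 4 / (2 * (v p.1) ^ 4) - 3 * p.2 ^ 2 * α ^ 2 / (v p.1) ^ 2 +
              α ^ 4 / 2))) p := setIntegral_congr_set hae
    _ = ∫ p in S₂, H p := setIntegral_congr_fun hS₂m hpoint
    _ = ∫ x in Ioo (0:ℝ) T, F x := hfub
    _ = ∫ x in Ioo (0:ℝ) T, |V1 x| • Ψ (v x) :=
        (setIntegral_congr_fun measurableSet_Ioo hpt).symm
    _ = ∫ s in Ioo c L, Ψ s := hjac.symm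
    _ = _ := hRHS1.symm
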